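/- Let f be a probability density function on ℝ^d that is log-concave and symmetric (f(-x) = f(x) for all x). Then ∫_{ℝ^d} f(x)² dx ≥ f(0) / 2^d. Moreover the essential supremum of f ⋆ f equals (f ⋆ f)(0) = ∫_{ℝ^d} f(x)² dx. -/

import Mathlib

open MeasureTheory ENNReal
open scoped RealInnerProductSpace

/-- Convolution of two functions on `ℝ^d`: `(f ⋆ g)(x) = ∫ f(t) g(x - t) dt`. -/
noncomputable def convE {d : ℕ} (f g : EuclideanSpace ℝ (Fin d) → ℝ) :
    EuclideanSpace ℝ (Fin d) → ℝ :=
  fun x => ∫ t, f t * g (x - t)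

/-- A nonnegative function on `ℝ^d` is log-concave iff
`f((1-t)x + ty) ≥ f(x)^{1-t} f(y)^t` for all `x, y` and `t ∈ [0,1]`
(equivalently `f = e^{-V}` with `V : ℝ^d → ℝ ∪ {∞}` convex). -/
def LogConcaveFunE {d : ℕ} (f : EuclideanSpace ℝ (Fin d) → ℝ) : Prop :=
  ∀ (x y : EuclideanSpace ℝ (Fin d)) (t : ℝ), 0 ≤ t → t ≤ 1 →
    f x ^ (1 - t) * f y ^ t ≤ f ((1 - t) • x + t • y)

/-- Essential supremum of a function on `ℝ^d`, valued in `ℝ≥0∞`. -/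
noncomputable def essSupNNE {d : ℕ} (f : EuclideanSpace ℝ (Fin d) → ℝ) : ℝ≥0∞ :=
  essSup (fun x => ENNReal.ofReal (f x)) volume

lemma convE_self_continuous {d : ℕ} (f : EuclideanSpace ℝ (Fin d) → ℝ)
    (hfm : Measurable f) (hf2 : Integrable (fun x => f x ^ 2)) :
    Continuous (convE f f) := by
  have hm2 : MemLp f 2 (volume : Measure (EuclideanSpace ℝ (Fin d))) :=
    (memLp_two_iff_integrable_sq hfm.aestronglyMeasurable).2 hf2
  set F : Lp ℝ 2 (volume : Measure (EuclideanSpace ℝ (Fin d))) := hm2.toLp f with hF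
  have hmp : ∀ x : EuclideanSpace ℝ (Fin d),
      MeasurePreserving (fun t : EuclideanSpace ℝ (Fin d) => x - t) volume volume :=
    fun x => Measure.measurePreserving_sub_left volume x
  set C : EuclideanSpace ℝ (Fin d) → C(EuclideanSpace ℝ (Fin d), EuclideanSpace ℝ (Fin d)) :=
    fun x => ⟨fun t => x - t, (continuous_const.sub continuous_id)⟩ with hCdef
  have hC : Continuous C :=
    ContinuousMap.continuous_of_continuous_uncurry _ (continuous_fst.sub continuous_snd)
  set T : EuclideanSpace ℝ (Fin d) → Lp ℝ 2 (volume : Measure (EuclideanSpace ℝ (Fin d))) :=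
    fun x => Lp.compMeasurePreserving (C x) (hmp x) F with hT
  have hTc : Continuous T := by
    have h2 : ((2:ℝ≥0∞)) ≠ ∞ := by simp
    exact (Lp.compMeasurePreserving_continuous volume volume ℝ h2).comp
      (continuous_const.prodMk (Continuous.subtype_mk hC fun x => hmp x))
  have hGc : Continuous fun x : EuclideanSpace ℝ (Fin d) => ⟪F, T x⟫ := continuous_const.inner hTc
  have hval : ∀ x, convE f f x = ⟪F, T x⟫ := by
    intro x
    rw [L2.inner_def]
    refine (integral_congr_ae ?_).symm
    filter_upwards [hm2.coeFn_toLp, Lp.coeFn_compMeasurePreserving (f := ⇑(C x)) F (hmp x),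
      (hmp x).quasiMeasurePreserving.ae_eq_comp hm2.coeFn_toLp] with t h1 h2 h3
    simp only [RCLike.inner_apply, starRingEnd_apply, star_trivial]
    rw [h1, h2]
    simp only [C, ContinuousMap.coe_mk, Function.comp_apply] at h3 ⊢
    rw [h3, mul_comm]
  have : convE f f = fun x => ⟪F, T x⟫ := funext hval
  rw [this]; exact hGc

/-- For a symmetric log-concave probability density `f` on `ℝ^d`:
`∫ f² ≥ f(0)/2^d`, and `‖f ⋆ f‖_∞ = (f ⋆ f)(0) = ∫ f²`. -/
theorem symmetric_logconcave_self_conv (d : ℕ) (f : EuclideanSpace ℝ (Fin d) → ℝ)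
    (hf0 : ∀ x, 0 ≤ f x) (hfm : Measurable f) (hf1 : ∫ x, f x = 1)
    (hflc : LogConcaveFunE f) (hsym : ∀ x, f (-x) = f x) :
    f 0 / 2 ^ d ≤ ∫ x, (f x) ^ 2 ∧
    essSupNNE (convE f f) = ENNReal.ofReal (convE f f 0) ∧
    convE f f 0 = ∫ x, (f x) ^ 2 := by
  -- f is integrable
  have hfi : Integrable f := by
    by_contra h
    rw [integral_undef h] at hf1
    norm_num at hf1
  -- f is bounded by f 0
  have hbd : ∀ x, f x ≤ f 0 := by
    intro x
    have h := hflc x (-x) (1/2) (by norm_num) (by norm_num)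
    rw [hsym x] at h
    have e : ((1:ℝ) - 1/2) • x + (1/2 : ℝ) • (-x) = (0 : EuclideanSpace ℝ (Fin d)) := by
      module
    rw [e] at h
    have e2 : f x = f x ^ ((1:ℝ) - 1/2) * f x ^ ((1/2) : ℝ) := by
      rw [← Real.rpow_add' (hf0 x) (by norm_num)]
      norm_num
    linarith [h, e2.ge]
  -- f² is integrable
  have hf2 : Integrable (fun x => f x ^ 2) := by
    refine Integrable.mono' (hfi.const_mul (f 0)) ((hfm.pow_const 2).aestronglyMeasurable) ?_
    filter_upwards with x
    rw [Real.norm_eq_abs, abs_of_nonneg (by positivity)]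
    have := hbd x
    nlinarith [hf0 x]
  -- integrability of translates
  have hIx : ∀ x : EuclideanSpace ℝ (Fin d), Integrable (fun t => f (x - t) ^ 2) := by
    intro x
    have hmp : MeasurePreserving (fun t : EuclideanSpace ℝ (Fin d) => x - t) volume volume :=
      Measure.measurePreserving_sub_left volume x
    have := (hmp.integrable_comp hf2.aestronglyMeasurable).2 hf2
    exact this
  -- integrability of convolution integrand
  have hmul : ∀ x : EuclideanSpace ℝ (Fin d), Integrable (fun t => f t * f (x - t)) := by
    intro x
    refine Integrable.mono' (((hf2.add (hIx x)).div_const 2))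
      ((hfm.mul (hfm.comp (measurable_const.sub measurable_id))).aestronglyMeasurable) ?_
    filter_upwards with t
    rw [Real.norm_eq_abs, abs_of_nonneg (mul_nonneg (hf0 t) (hf0 _))]
    simp only [Pi.add_apply]
    nlinarith [sq_nonneg (f t - f (x - t))]
  -- claim 3
  have hg0 : convE f f 0 = ∫ x, f x ^ 2 := by
    unfold convE
    refine integral_congr_ae (Filter.Eventually.of_forall fun t => ?_)
    show f t * f (0 - t) = f t ^ 2
    rw [zero_sub, hsym t, ← pow_two]
  -- upper bound
  have hub : ∀ x, convE f f x ≤ ∫ y, f y ^ 2 := by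
    intro x
    have h1 : convE f f x ≤ ∫ t, (f t ^ 2 + f (x - t) ^ 2) / 2 := by
      refine integral_mono (hmul x) ((hf2.add (hIx x)).div_const 2) fun t => ?_
      nlinarith [sq_nonneg (f t - f (x - t))]
    have h2 : ∫ t, (f t ^ 2 + f (x - t) ^ 2) / 2 = ∫ y, f y ^ 2 := by
      rw [integral_div, integral_add hf2 (hIx x),
        integral_sub_left_eq_self (fun t => f t ^ 2) volume x]
      ring
    linarith
  -- nonnegativity of convolution
  have hgnn : ∀ x, 0 ≤ convE f f x := fun x =>
    integral_nonneg fun t => mul_nonneg (hf0 t) (hf0 _)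
  -- claim 1
  have claim1 : f 0 / 2 ^ d ≤ ∫ x, (f x) ^ 2 := by
    have hhalf : ∀ x : EuclideanSpace ℝ (Fin d),
        f 0 * f x ≤ f ((2⁻¹ : ℝ) • x) ^ 2 := by
      intro x
      have h := hflc 0 x (1/2) (by norm_num) (by norm_num)
      have e : ((1:ℝ) - 1/2) • (0 : EuclideanSpace ℝ (Fin d)) + (1/2 : ℝ) • x
          = (2⁻¹ : ℝ) • x := by
        rw [smul_zero, zero_add]
        norm_num
      rw [e] at h
      have h0 : (0:ℝ) ≤ f 0 ^ ((1:ℝ) - 1/2) * f x ^ ((1/2) : ℝ) :=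
        mul_nonneg (Real.rpow_nonneg (hf0 0) _) (Real.rpow_nonneg (hf0 x) _)
      calc f 0 * f x = (f 0 ^ ((1:ℝ) - 1/2) * f x ^ ((1/2) : ℝ)) ^ 2 := by
            rw [mul_pow, ← Real.rpow_natCast (f 0 ^ ((1:ℝ) - 1/2)) 2,
              ← Real.rpow_natCast (f x ^ ((1/2):ℝ)) 2,
              ← Real.rpow_mul (hf0 0), ← Real.rpow_mul (hf0 x)]
            norm_num
        _ ≤ f ((2⁻¹ : ℝ) • x) ^ 2 := by
            exact pow_le_pow_left₀ h0 h 2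
    have hint : Integrable (fun x : EuclideanSpace ℝ (Fin d) => f ((2⁻¹:ℝ) • x) ^ 2) :=
      Integrable.comp_smul hf2 (by norm_num)
    have hmono : ∫ x, f 0 * f x ≤ ∫ x, f ((2⁻¹:ℝ) • x) ^ 2 :=
      integral_mono (hfi.const_mul _) hint hhalf
    have hlhs : ∫ x, f 0 * f x = f 0 := by
      rw [integral_const_mul, hf1, mul_one]
    have hrhs : ∫ x, f ((2⁻¹:ℝ) • x) ^ 2 = (2:ℝ) ^ d * ∫ x, f x ^ 2 := by
      rw [Measure.integral_comp_smul volume (fun y => f y ^ 2) (2⁻¹:ℝ)]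
      rw [finrank_euclideanSpace_fin]
      rw [smul_eq_mul]
      congr 1
      rw [← inv_pow, inv_inv, abs_of_nonneg (by positivity)]
    rw [hlhs, hrhs] at hmono
    rw [div_le_iff₀ (by positivity)]
    linarith
  refine ⟨claim1, ?_, hg0⟩
  -- claim 2 : essSup
  have hgc : Continuous (convE f f) := convE_self_continuous f hfm hf2
  have hle : essSupNNE (convE f f) ≤ ENNReal.ofReal (convE f f 0) := by
    refine essSup_le_of_ae_le _ (Filter.Eventually.of_forall fun x => ?_)
    exact ENNReal.ofReal_le_ofReal (by rw [hg0]; exact hub x)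
  refine le_antisymm hle ?_
  by_contra hlt
  push_neg at hlt
  have hSne : essSupNNE (convE f f) ≠ ⊤ := (lt_of_lt_of_le hlt le_top).ne
  have hSlt : (essSupNNE (convE f f)).toReal < convE f f 0 :=
    (ENNReal.lt_ofReal_iff_toReal_lt hSne).1 hlt
  set c : ℝ := ((essSupNNE (convE f f)).toReal + convE f f 0) / 2 with hc
  have hc1 : (essSupNNE (convE f f)).toReal < c := by rw [hc]; linarith
  have hc2 : c < convE f f 0 := by rw [hc]; linarith
  have hU : IsOpen {x : EuclideanSpace ℝ (Fin d) | c < convE f f x} :=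
    isOpen_lt continuous_const hgc
  have hUpos : 0 < volume {x : EuclideanSpace ℝ (Fin d) | c < convE f f x} :=
    hU.measure_pos volume ⟨0, hc2⟩
  have hae : ∀ᵐ x : EuclideanSpace ℝ (Fin d), ¬ (c < convE f f x) := by
    filter_upwards [ae_le_essSup (fun x => ENNReal.ofReal (convE f f x))] with x hx
    have : convE f f x ≤ (essSupNNE (convE f f)).toReal := by
      have := ENNReal.toReal_mono hSne hx
      rwa [ENNReal.toReal_ofReal (hgnn x)] at this
    exact not_lt.2 (this.trans hc1.le)
  have : volume {x : EuclideanSpace ℝ (Fin d) | c < convE f f x} = 0 := by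
    rw [measure_eq_zero_iff_ae_notMem]
    simpa using hae
  exact absurd this hUpos.ne'
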